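/- Let f : ℝⁿ × ℝ → ℝ be twice continuously differentiable, m-strongly convex in x uniformly in t (i.e. ∇²ₓₓ f(x;t) ⪰ m·I with m > 0), and suppose ‖∇_{tx} f(x;t)‖ ≤ C₀ for all x, t. Then the unique minimizer trajectory x*(t) := argmin_x f(x;t) is Lipschitz in time: for any t₁ ≤ t₂, ‖x*(t₂) − x*(t₁)‖ ≤ (C₀/m)(t₂ − t₁). -/

import Mathlib

abbrev Eucl (n : ℕ) := EuclideanSpace ℝ (Fin n)

/-- Lipschitz continuity in time of the minimizer trajectory. -/
theorem stmt_0 (n : ℕ) (f : Eucl n → ℝ → ℝ) (G : Eucl n → ℝ → Eucl n)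
    (xstar : ℝ → Eucl n) (m C₀ : ℝ)
    (hm : 0 < m) (hC₀ : 0 ≤ C₀)
    (hsmooth : ∀ t, ContDiff ℝ 2 (fun x => f x t))
    (hgrad : ∀ x t, HasGradientAt (fun y => f y t) (G x t) x)
    -- m-strong convexity in x, uniformly in t (Hessian ⪰ m I)
    (hstrong : ∀ t x y, m * ‖x - y‖ ^ 2 ≤ (inner ℝ (G x t - G y t) (x - y) : ℝ))
    -- ‖∇ₜₓ f(x;t)‖ ≤ C₀ : the gradient is C₀-Lipschitz in time
    (htime : ∀ x t s, ‖G x t - G x s‖ ≤ C₀ * |t - s|)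
    -- x*(t) is the unique global minimizer of f(·;t)
    (hmin : ∀ t, IsMinOn (fun x => f x t) Set.univ (xstar t))
    (huniq : ∀ t y, IsMinOn (fun x => f x t) Set.univ y → y = xstar t) :
    ∀ t₁ t₂ : ℝ, t₁ ≤ t₂ → ‖xstar t₂ - xstar t₁‖ ≤ (C₀ / m) * (t₂ - t₁) := by

  intro t₁ t₂ ht
  -- gradient vanishes at the minimizer
  have hzero : ∀ t, G (xstar t) t = 0 := by
    intro t
    have hloc : IsLocalMin (fun x => f x t) (xstar t) := by
      have := (hmin t)
      exact this.isLocalMin (by simp)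
    have hfd := (hgrad (xstar t) t).hasFDerivAt
    have h0 := hloc.hasFDerivAt_eq_zero hfd
    exact (InnerProductSpace.toDual ℝ (Eucl n)).map_eq_zero_iff.mp h0
  set x₁ := xstar t₁
  set x₂ := xstar t₂
  have key : m * ‖x₂ - x₁‖ ^ 2 ≤ C₀ * (t₂ - t₁) * ‖x₂ - x₁‖ := by
    calc m * ‖x₂ - x₁‖ ^ 2 ≤ (inner ℝ (G x₂ t₂ - G x₁ t₂) (x₂ - x₁) : ℝ) := hstrong t₂ x₂ x₁
    _ = (inner ℝ (G x₁ t₁ - G x₁ t₂) (x₂ - x₁) : ℝ) := by rw [hzero t₂, hzero t₁]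
    _ ≤ ‖G x₁ t₁ - G x₁ t₂‖ * ‖x₂ - x₁‖ := real_inner_le_norm _ _
    _ ≤ C₀ * |t₁ - t₂| * ‖x₂ - x₁‖ :=
        mul_le_mul_of_nonneg_right (htime x₁ t₁ t₂) (norm_nonneg _)
    _ = C₀ * (t₂ - t₁) * ‖x₂ - x₁‖ := by rw [abs_sub_comm, abs_of_nonneg (by linarith)]
  rcases eq_or_lt_of_le (norm_nonneg (x₂ - x₁)) with h | h
  · rw [← h]; exact mul_nonneg (div_nonneg hC₀ hm.le) (by linarith)
  · have : m * ‖x₂ - x₁‖ ≤ C₀ * (t₂ - t₁) := by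
      have := key
      nlinarith [h]
    rw [div_mul_eq_mul_div, le_div_iff₀ hm, mul_comm]
    linarith
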